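/- For every graph G and r ∈ ℕ, wcol_r(G) ≤ (col_r(G))^r. -/

import Mathlib

def WReach {V : Type*} (G : SimpleGraph V) (L : V → ℕ) (r : ℕ) (v : V) : Set V :=
  {u | ∃ p : G.Walk v u, p.length ≤ r ∧ ∀ w ∈ p.support, L u ≤ L w}

def SReach {V : Type*} (G : SimpleGraph V) (L : V → ℕ) (r : ℕ) (v : V) : Set V :=
  {u | u = v ∨ ∃ p : G.Walk v u, p.length ≤ r ∧ L u < L v ∧
    ∀ w ∈ p.support, L w < L v → w = u}

noncomputable def wcol {V : Type*} [Fintype V] (G : SimpleGraph V) (r : ℕ) : ℕ :=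
  sInf {c | ∃ L : V → ℕ, Function.Injective L ∧ ∀ v, (WReach G L r v).ncard ≤ c}

noncomputable def scol {V : Type*} [Fintype V] (G : SimpleGraph V) (r : ℕ) : ℕ :=
  sInf {c | ∃ L : V → ℕ, Function.Injective L ∧ ∀ v, (SReach G L r v).ncard ≤ c}

/-- Splitting lemma: along any walk from `v`, either every vertex has label `≥ c`,
or the walk splits at the first vertex `x` with `L x < c`. -/
lemma walk_split {V : Type*} {G : SimpleGraph V} (L : V → ℕ) (c : ℕ) :
    ∀ {v u : V} (p : G.Walk v u), c ≤ L v →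
      (∀ w ∈ p.support, c ≤ L w) ∨
      ∃ (x : V) (q : G.Walk v x) (q' : G.Walk x u),
        q.length + q'.length ≤ p.length ∧ 1 ≤ q.length ∧ L x < c ∧
        (∀ w ∈ q.support, L w < c → w = x) ∧
        (∀ w ∈ q'.support, w ∈ p.support) := by
  intro v u p
  induction p with
  | nil =>
    intro hv
    left
    intro w hw
    simp only [SimpleGraph.Walk.support_nil, List.mem_singleton] at hw
    subst hw; exact hv
  | @cons v v' u h t ih =>
    intro hv
    by_cases hlt : L v' < c
    · right
      refine ⟨v', SimpleGraph.Walk.cons h SimpleGraph.Walk.nil, t, ?_, ?_, hlt, ?_, ?_⟩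
      · simp [Nat.add_comm]
      · simp
      · intro w hw hwlt
        simp only [SimpleGraph.Walk.support_cons, SimpleGraph.Walk.support_nil,
          List.mem_cons, List.mem_singleton] at hw
        rcases hw with rfl | rfl | h'
        · omega
        · rfl
        · exact absurd h' List.not_mem_nil
      · intro w hw
        simp only [SimpleGraph.Walk.support_cons, List.mem_cons]
        exact Or.inr hw
    · push_neg at hlt
      rcases ih hlt with hall | ⟨x, q, q', hlen, hq1, hx, hqp, hsub⟩
      · left
        intro w hw
        simp only [SimpleGraph.Walk.support_cons, List.mem_cons] at hw
        rcases hw with rfl | hw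
        · exact hv
        · exact hall w hw
      · right
        refine ⟨x, SimpleGraph.Walk.cons h q, q', ?_, ?_, hx, ?_, ?_⟩
        · simp only [SimpleGraph.Walk.length_cons]; omega
        · simp
        · intro w hw hwlt
          simp only [SimpleGraph.Walk.support_cons, List.mem_cons] at hw
          rcases hw with rfl | hw
          · omega
          · exact hqp w hw hwlt
        · intro w hw
          simp only [SimpleGraph.Walk.support_cons, List.mem_cons]
          exact Or.inr (hsub w hw)

lemma wreach_subset {V : Type*} {G : SimpleGraph V} {L : V → ℕ}
    (hinj : Function.Injective L) {r k : ℕ} (hk : k + 1 ≤ r) (v : V) :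
    WReach G L (k + 1) v ⊆ ⋃ x ∈ SReach G L r v, WReach G L k x := by
  intro u hu
  obtain ⟨p, hlen, hmin⟩ := hu
  rcases walk_split L (L v) p le_rfl with hall | ⟨x, q, q', hlen2, hq1, hx, hqp, hsub⟩
  · -- then u = v
    have h1 : L u ≤ L v := hmin v p.start_mem_support
    have h2 : L v ≤ L u := hall u p.end_mem_support
    have : u = v := hinj (le_antisymm h1 h2)
    subst this
    refine Set.mem_biUnion (Or.inl rfl : u ∈ SReach G L r u) ?_
    exact ⟨SimpleGraph.Walk.nil, by simp, by simp⟩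
  · have hxmem : x ∈ SReach G L r v := Or.inr ⟨q, by omega, hx, hqp⟩
    refine Set.mem_biUnion hxmem ⟨q', by omega, fun w hw => hmin w (hsub w hw)⟩

lemma wreach_bound {V : Type*} [Fintype V] {G : SimpleGraph V} {L : V → ℕ}
    (hinj : Function.Injective L) {r s : ℕ} (hs : ∀ v, (SReach G L r v).ncard ≤ s) :
    ∀ k, k ≤ r → ∀ v, (WReach G L k v).ncard ≤ s ^ k := by
  intro k
  induction k with
  | zero =>
    intro _ v
    have : WReach G L 0 v = {v} := by
      ext u
      constructor
      · rintro ⟨p, hlen, -⟩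
        have := SimpleGraph.Walk.eq_of_length_eq_zero (Nat.le_zero.mp hlen)
        simp [this.symm]
      · rintro rfl
        exact ⟨SimpleGraph.Walk.nil, by simp, by simp⟩
    simp [this]
  | succ k ih =>
    intro hk v
    classical
    have hsub := wreach_subset (G := G) hinj hk v
    have hU : (⋃ x ∈ SReach G L r v, WReach G L k x).ncard ≤ s ^ (k + 1) := by
      have hfin : ∀ (A : Set V), A.Finite := fun A => A.toFinite
      have : (⋃ x ∈ SReach G L r v, WReach G L k x) =
          ↑((SReach G L r v).toFinset.biUnion (fun x => (WReach G L k x).toFinset)) := by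
        ext u
        simp [Set.mem_iUnion]
      rw [this, Set.ncard_coe_finset]
      calc ((SReach G L r v).toFinset.biUnion fun x => (WReach G L k x).toFinset).card
          ≤ (SReach G L r v).toFinset.card * s ^ k := by
            apply Finset.card_biUnion_le_card_mul
            intro x _
            rw [← Set.ncard_eq_toFinset_card']
            exact ih (by omega) x
        _ ≤ s * s ^ k := by
            apply Nat.mul_le_mul_right
            rw [← Set.ncard_eq_toFinset_card']
            exact hs v
        _ = s ^ (k + 1) := by ring
    exact le_trans (Set.ncard_le_ncard hsub (Set.toFinite _)) hU

/-- For every graph `G` and radius `r`, `wcol_r(G) ≤ (col_r(G))^r`. -/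
theorem stmt7 {V : Type*} [Fintype V] (G : SimpleGraph V) (r : ℕ) :
    wcol G r ≤ (scol G r) ^ r := by
  classical
  have hne : {c | ∃ L : V → ℕ, Function.Injective L ∧ ∀ v, (SReach G L r v).ncard ≤ c}.Nonempty := by
    refine ⟨Fintype.card V, fun v => ((Fintype.equivFin V v : ℕ)), ?_, ?_⟩
    · intro a b hab
      have : (Fintype.equivFin V a) = (Fintype.equivFin V b) := Fin.val_injective hab
      exact (Fintype.equivFin V).injective this
    · intro v
      have : (SReach G (fun v => ((Fintype.equivFin V v : ℕ))) r v).ncard ≤ (Set.univ : Set V).ncard :=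
        Set.ncard_le_ncard (Set.subset_univ _) (Set.toFinite _)
      simpa [Set.ncard_univ] using this
  have hmem := Nat.sInf_mem hne
  obtain ⟨L, hinj, hb⟩ := hmem
  apply Nat.sInf_le
  exact ⟨L, hinj, fun v => wreach_bound hinj hb r le_rfl v⟩
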